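/- arXiv:1704.05491 — 2 statements merged into one kernel-verified Lean document; each statement's English description precedes it below -/
import Mathlib

section
/- Let P_1, …, P_N be discrete probability measures on ℝ^d and λ_1, …, λ_N > 0 with ∑_{i=1}^N λ_i = 1. Let P̄ be a barycenter and let P̄_org minimize φ among probability measures supported in S_org = ∪_{i=1}^N supp(P_i). Then φ(P̄_org) ≤ 2 · φ(P̄). -/
open MeasureTheory ENNReal
open ProbabilityTheory
open scoped RealInnerProductSpace

/-- Points of `ℝ^d`. -/
abbrev Pt (d : ℕ) := EuclideanSpace ℝ (Fin d)

/-- The set of atoms (support points) of a measure. -/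
def msupp {α : Type*} [MeasurableSpace α] (P : Measure α) : Set α := {x | P {x} ≠ 0}

/-- A measure is finitely supported (discrete) if its set of atoms is finite and
carries all the mass. -/
def FinitelySupported {α : Type*} [MeasurableSpace α] (P : Measure α) : Prop :=
  (msupp P).Finite ∧ P (msupp P)ᶜ = 0

/-- Finite second moment. -/
def FiniteSecondMoment {d : ℕ} (P : Measure (Pt d)) : Prop :=
  ∫⁻ x, ENNReal.ofReal (‖x‖ ^ 2) ∂P < ⊤

/-- The squared 2-Wasserstein distance: the infimum of `∫ ‖x - y‖² dπ` over all
couplings `π` of `P` and `Q`. -/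
noncomputable def W2sq {d : ℕ} (P Q : Measure (Pt d)) : ℝ≥0∞ :=
  ⨅ π ∈ {π : Measure (Pt d × Pt d) | π.map Prod.fst = P ∧ π.map Prod.snd = Q},
    ∫⁻ p, ENNReal.ofReal (‖p.1 - p.2‖ ^ 2) ∂π

/-- The barycenter objective `φ(P) = ∑ i, λ i * W₂(P, P i)²`. -/
noncomputable def phi {d N : ℕ} (l : Fin N → ℝ) (Pm : Fin N → Measure (Pt d))
    (P : Measure (Pt d)) : ℝ≥0∞ :=
  ∑ i, ENNReal.ofReal (l i) * W2sq P (Pm i)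

/-- A (Wasserstein) barycenter: a probability measure with finite second moment
minimizing `φ` among all such measures. -/
def IsBarycenter {d N : ℕ} (l : Fin N → ℝ) (Pm : Fin N → Measure (Pt d))
    (P : Measure (Pt d)) : Prop :=
  IsProbabilityMeasure P ∧ FiniteSecondMoment P ∧
    ∀ Q : Measure (Pt d), IsProbabilityMeasure Q → FiniteSecondMoment Q →
      phi l Pm P ≤ phi l Pm Q

/-- The set `S` of weighted centroids of combinations of support points,
one from each measure. -/
def centroidSet {d N : ℕ} (l : Fin N → ℝ) (Pm : Fin N → Measure (Pt d)) : Set (Pt d) :=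
  {y | ∃ x : Fin N → Pt d, (∀ i, x i ∈ msupp (Pm i)) ∧ y = ∑ i, l i • x i}

/-- The union `S_org` of the supports of the measures. -/
def origSupport {d N : ℕ} (Pm : Fin N → Measure (Pt d)) : Set (Pt d) :=
  ⋃ i, msupp (Pm i)

section AuxTwoApprox


variable {d N : ℕ}

lemma integrable_sq_of_lintegral {μ : Measure (Pt d)} (h : ∫⁻ y, ENNReal.ofReal (‖y‖ ^ 2) ∂μ < ⊤) :
    Integrable (fun y : Pt d => ‖y‖ ^ 2) μ := by
  refine ⟨(measurable_norm.pow_const 2).aestronglyMeasurable, ?_⟩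
  rw [hasFiniteIntegral_iff_ofReal (Filter.Eventually.of_forall fun y => sq_nonneg _)]
  exact h

lemma integrable_id_of_sq {μ : Measure (Pt d)} [IsProbabilityMeasure μ]
    (h : Integrable (fun y : Pt d => ‖y‖ ^ 2) μ) : Integrable (fun y : Pt d => y) μ := by
  refine Integrable.mono' ((integrable_const 1).add h) measurable_id.aestronglyMeasurable
    (Filter.Eventually.of_forall fun y => ?_)
  have := norm_nonneg y
  simp only [Pi.add_apply]
  nlinarith [sq_nonneg (‖y‖ - 1)]

lemma core_ineq (l : Fin N → ℝ) (hl : ∀ i, 0 ≤ l i) (hsum : ∑ i, l i = 1)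
    (x : Pt d) (ν : Fin N → Measure (Pt d)) [∀ i, IsProbabilityMeasure (ν i)]
    (hmom : ∀ i, ∫⁻ y, ENNReal.ofReal (‖y‖ ^ 2) ∂(ν i) < ⊤) :
    ∑ i, ∑ j, ENNReal.ofReal (l i) * (ENNReal.ofReal (l j) *
      ∫⁻ y, ∫⁻ z, ENNReal.ofReal (‖y - z‖ ^ 2) ∂(ν j) ∂(ν i)) ≤
    2 * ∑ i, ENNReal.ofReal (l i) * ∫⁻ y, ENNReal.ofReal (‖x - y‖ ^ 2) ∂(ν i) := by
  have hI2 : ∀ i, Integrable (fun y : Pt d => ‖y‖ ^ 2) (ν i) :=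
    fun i => integrable_sq_of_lintegral (hmom i)
  have hI1 : ∀ i, Integrable (fun y : Pt d => y) (ν i) := fun i => integrable_id_of_sq (hI2 i)
  set a : Fin N → ℝ := fun i => ∫ y, ‖y‖ ^ 2 ∂(ν i) with ha
  set m : Fin N → Pt d := fun i => ∫ y, y ∂(ν i) with hm
  have key1 : ∀ (j : Fin N) (y : Pt d), Integrable (fun z => ‖y - z‖ ^ 2) (ν j) := by
    intro j y
    refine Integrable.mono' ((integrable_const (2 * ‖y‖ ^ 2)).add ((hI2 j).const_mul 2))
      ((measurable_const.sub measurable_id).norm.pow_const 2).aestronglyMeasurable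
      (Filter.Eventually.of_forall fun z => ?_)
    have h1 := norm_sub_le y z
    have h2 := norm_nonneg y
    have h3 := norm_nonneg z
    simp only [Pi.add_apply]
    rw [Real.norm_eq_abs, abs_of_nonneg (sq_nonneg _)]
    have h5 : ‖y - z‖ ^ 2 ≤ (‖y‖ + ‖z‖) ^ 2 := by exact pow_le_pow_left₀ (norm_nonneg _) h1 2
    nlinarith [h5, sq_nonneg (‖y‖ - ‖z‖)]
  have hIinner : ∀ (i : Fin N) (w : Pt d), Integrable (fun z : Pt d => ⟪w, z⟫) (ν i) := by
    intro i w
    have h := (innerSL ℝ w).integrable_comp (hI1 i)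
    simpa only [innerSL_apply_apply] using h
  have hinner_int : ∀ (i : Fin N) (w : Pt d), ∫ z, ⟪w, z⟫ ∂(ν i) = ⟪w, m i⟫ :=
    fun i w => integral_inner (𝕜 := ℝ) (hI1 i) w
  -- the integral of ‖y - z‖² dν j
  have int1 : ∀ (j : Fin N) (y : Pt d),
      ∫ z, ‖y - z‖ ^ 2 ∂(ν j) = ‖y‖ ^ 2 - 2 * ⟪y, m j⟫ + a j := by
    intro j y
    have e : (fun z : Pt d => ‖y - z‖ ^ 2)
        = fun z => (‖y‖ ^ 2 - 2 * ⟪y, z⟫) + ‖z‖ ^ 2 := funext fun z => norm_sub_sq_real y z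
    have hg : Integrable (fun z : Pt d => 2 * ⟪y, z⟫) (ν j) := (hIinner j y).const_mul 2
    have hfg : Integrable (fun z : Pt d => ‖y‖ ^ 2 - 2 * ⟪y, z⟫) (ν j) :=
      (integrable_const _).sub hg
    rw [e, integral_add hfg (hI2 j), integral_sub (integrable_const _) hg,
      integral_const_mul, hinner_int j y, integral_const]
    simp [ha]
  have Dnn : ∀ (j : Fin N) (y : Pt d), 0 ≤ ‖y‖ ^ 2 - 2 * ⟪y, m j⟫ + a j := by
    intro j y
    rw [← int1 j y]
    exact integral_nonneg fun z => sq_nonneg _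
  have lin1 : ∀ (j : Fin N) (y : Pt d),
      ∫⁻ z, ENNReal.ofReal (‖y - z‖ ^ 2) ∂(ν j)
        = ENNReal.ofReal (‖y‖ ^ 2 - 2 * ⟪y, m j⟫ + a j) := by
    intro j y
    rw [← int1 j y, ofReal_integral_eq_lintegral_ofReal (key1 j y)
      (Filter.Eventually.of_forall fun z => sq_nonneg _)]
  -- integrating again
  have int2I : ∀ (i j : Fin N),
      Integrable (fun y : Pt d => ‖y‖ ^ 2 - 2 * ⟪y, m j⟫ + a j) (ν i) := by
    intro i j
    have h2 : Integrable (fun y : Pt d => ⟪y, m j⟫) (ν i) :=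
      (hIinner i (m j)).congr (Filter.Eventually.of_forall fun y => real_inner_comm _ _)
    exact ((hI2 i).sub (h2.const_mul 2)).add (integrable_const _)
  have int2 : ∀ (i j : Fin N),
      ∫ y, (‖y‖ ^ 2 - 2 * ⟪y, m j⟫ + a j) ∂(ν i) = a i - 2 * ⟪m i, m j⟫ + a j := by
    intro i j
    have h2 : Integrable (fun y : Pt d => ⟪y, m j⟫) (ν i) :=
      (hIinner i (m j)).congr (Filter.Eventually.of_forall fun y => real_inner_comm _ _)
    have hval : ∫ y, ⟪y, m j⟫ ∂(ν i) = ⟪m i, m j⟫ := by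
      calc ∫ y, ⟪y, m j⟫ ∂(ν i) = ∫ y, ⟪m j, y⟫ ∂(ν i) := by
            refine integral_congr_ae (Filter.Eventually.of_forall fun y => ?_)
            exact real_inner_comm _ _
        _ = ⟪m j, m i⟫ := hinner_int i (m j)
        _ = ⟪m i, m j⟫ := real_inner_comm _ _
    have hg : Integrable (fun y : Pt d => 2 * ⟪y, m j⟫) (ν i) := h2.const_mul 2
    have hfg : Integrable (fun y : Pt d => ‖y‖ ^ 2 - 2 * ⟪y, m j⟫) (ν i) := (hI2 i).sub hg
    rw [integral_add hfg (integrable_const _), integral_sub (hI2 i) hg,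
      integral_const_mul, hval, integral_const]
    simp [ha]
  have lin2 : ∀ (i j : Fin N),
      ∫⁻ y, ∫⁻ z, ENNReal.ofReal (‖y - z‖ ^ 2) ∂(ν j) ∂(ν i)
        = ENNReal.ofReal (a i - 2 * ⟪m i, m j⟫ + a j) := by
    intro i j
    simp_rw [lin1 j]
    rw [← int2 i j, ofReal_integral_eq_lintegral_ofReal (int2I i j)
      (Filter.Eventually.of_forall fun y => Dnn j y)]
  have cnn : ∀ i j, 0 ≤ a i - 2 * ⟪m i, m j⟫ + a j := by
    intro i j
    rw [← int2 i j]
    exact integral_nonneg fun y => Dnn j y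
  have lin3 : ∀ i : Fin N, ∫⁻ y, ENNReal.ofReal (‖x - y‖ ^ 2) ∂(ν i)
      = ENNReal.ofReal (‖x‖ ^ 2 - 2 * ⟪x, m i⟫ + a i) := fun i => lin1 i x
  have enn : ∀ i : Fin N, 0 ≤ ‖x‖ ^ 2 - 2 * ⟪x, m i⟫ + a i := fun i => Dnn i x
  -- rewrite both sides as ofReal of real sums
  simp_rw [lin2, lin3]
  have hL : ∑ i, ∑ j, ENNReal.ofReal (l i) * (ENNReal.ofReal (l j)
        * ENNReal.ofReal (a i - 2 * ⟪m i, m j⟫ + a j))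
      = ENNReal.ofReal (∑ i, ∑ j, l i * (l j * (a i - 2 * ⟪m i, m j⟫ + a j))) := by
    rw [ENNReal.ofReal_sum_of_nonneg fun i _ => Finset.sum_nonneg fun j _ =>
      mul_nonneg (hl i) (mul_nonneg (hl j) (cnn i j))]
    refine Finset.sum_congr rfl fun i _ => ?_
    rw [ENNReal.ofReal_sum_of_nonneg fun j _ => mul_nonneg (hl i) (mul_nonneg (hl j) (cnn i j))]
    refine Finset.sum_congr rfl fun j _ => ?_
    rw [ENNReal.ofReal_mul (hl i), ENNReal.ofReal_mul (hl j)]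
  have hR : (2 : ℝ≥0∞) * ∑ i, ENNReal.ofReal (l i)
        * ENNReal.ofReal (‖x‖ ^ 2 - 2 * ⟪x, m i⟫ + a i)
      = ENNReal.ofReal (2 * ∑ i, l i * (‖x‖ ^ 2 - 2 * ⟪x, m i⟫ + a i)) := by
    rw [ENNReal.ofReal_mul (by norm_num), ENNReal.ofReal_ofNat,
      ENNReal.ofReal_sum_of_nonneg fun i _ => mul_nonneg (hl i) (enn i)]
    congr 1
    refine Finset.sum_congr rfl fun i _ => ?_
    rw [ENNReal.ofReal_mul (hl i)]
  rw [hL, hR]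
  apply ENNReal.ofReal_le_ofReal
  -- the purely algebraic inequality
  set mm : Pt d := ∑ i, l i • m i with hmm
  have hsc : ∀ c : ℝ, ∑ i, l i * c = c := fun c => by rw [← Finset.sum_mul, hsum, one_mul]
  have hin : ∀ w : Pt d, ∑ j, l j * ⟪w, m j⟫ = ⟪w, mm⟫ := by
    intro w
    rw [hmm, inner_sum]
    exact Finset.sum_congr rfl fun j _ => (real_inner_smul_right w (m j) (l j)).symm
  have hin2 : ∑ i, l i * ⟪m i, mm⟫ = ⟪mm, mm⟫ := by
    nth_rewrite 2 [hmm]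
    rw [sum_inner]
    exact Finset.sum_congr rfl fun i _ => (real_inner_smul_left (m i) mm (l i)).symm
  have E1 : ∑ i, ∑ j, l i * (l j * (a i - 2 * ⟪m i, m j⟫ + a j))
      = 2 * (∑ i, l i * a i) - 2 * ⟪mm, mm⟫ := by
    have inner_sum_eq : ∀ i : Fin N, ∑ j, l j * (a i - 2 * ⟪m i, m j⟫ + a j)
        = a i - 2 * ⟪m i, mm⟫ + ∑ j, l j * a j := by
      intro i
      have : ∀ j : Fin N, l j * (a i - 2 * ⟪m i, m j⟫ + a j)
          = l j * a i - 2 * (l j * ⟪m i, m j⟫) + l j * a j := fun j => by ring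
      simp_rw [this, Finset.sum_add_distrib, Finset.sum_sub_distrib, ← Finset.mul_sum,
        hsc (a i), hin (m i)]
    calc ∑ i, ∑ j, l i * (l j * (a i - 2 * ⟪m i, m j⟫ + a j))
        = ∑ i, l i * (a i - 2 * ⟪m i, mm⟫ + ∑ j, l j * a j) := by
          refine Finset.sum_congr rfl fun i _ => ?_
          rw [← Finset.mul_sum, inner_sum_eq i]
      _ = 2 * (∑ i, l i * a i) - 2 * ⟪mm, mm⟫ := by
          have : ∀ i : Fin N, l i * (a i - 2 * ⟪m i, mm⟫ + ∑ j, l j * a j)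
              = l i * a i - 2 * (l i * ⟪m i, mm⟫) + l i * (∑ j, l j * a j) := fun i => by ring
          simp_rw [this, Finset.sum_add_distrib, Finset.sum_sub_distrib, ← Finset.mul_sum,
            hin2, hsc (∑ j, l j * a j)]
          ring
  have E2 : 2 * ∑ i, l i * (‖x‖ ^ 2 - 2 * ⟪x, m i⟫ + a i)
      = 2 * ‖x‖ ^ 2 - 4 * ⟪x, mm⟫ + 2 * ∑ i, l i * a i := by
    have : ∀ i : Fin N, l i * (‖x‖ ^ 2 - 2 * ⟪x, m i⟫ + a i)
        = l i * ‖x‖ ^ 2 - 2 * (l i * ⟪x, m i⟫) + l i * a i := fun i => by ring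
    simp_rw [this, Finset.sum_add_distrib, Finset.sum_sub_distrib, ← Finset.mul_sum,
      hsc (‖x‖ ^ 2), hin x]
    ring
  have hkey : ‖x - mm‖ ^ 2 = ‖x‖ ^ 2 - 2 * ⟪x, mm⟫ + ⟪mm, mm⟫ := by
    rw [norm_sub_sq_real, real_inner_self_eq_norm_sq]
  have h0 : (0 : ℝ) ≤ ‖x - mm‖ ^ 2 := sq_nonneg _
  rw [E1, E2]
  linarith [hkey ▸ h0]



variable {d N : ℕ}

lemma measurable_cost : Measurable (fun p : Pt d × Pt d => ENNReal.ofReal (‖p.1 - p.2‖ ^ 2)) :=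
  (((measurable_fst.sub measurable_snd).norm).pow_const 2).ennreal_ofReal

lemma pairwise_sum_le (l : Fin N → ℝ) (hl : ∀ i, 0 ≤ l i) (hsum : ∑ i, l i = 1)
    (μ : Measure (Pt d)) [IsProbabilityMeasure μ]
    (P : Fin N → Measure (Pt d)) (hP : ∀ i, IsProbabilityMeasure (P i))
    (hmom : ∀ i, ∫⁻ y, ENNReal.ofReal (‖y‖ ^ 2) ∂(P i) < ⊤)
    (π : Fin N → Measure (Pt d × Pt d))
    (hπ1 : ∀ i, (π i).map Prod.fst = μ) (hπ2 : ∀ i, (π i).map Prod.snd = P i) :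
    ∑ i, ∑ j, ENNReal.ofReal (l i) * (ENNReal.ofReal (l j) * W2sq (P i) (P j)) ≤
      2 * ∑ i, ENNReal.ofReal (l i) * ∫⁻ p, ENNReal.ofReal (‖p.1 - p.2‖ ^ 2) ∂(π i) := by
  haveI hπP : ∀ i, IsProbabilityMeasure (π i) := by
    intro i
    have h := congrArg (fun ν : Measure (Pt d) => ν Set.univ) (hπ1 i)
    simp only [Measure.map_apply measurable_fst MeasurableSet.univ, Set.preimage_univ] at h
    exact ⟨h.trans (measure_univ (μ := μ))⟩
  set κ : Fin N → Kernel (Pt d) (Pt d) := fun i => (π i).condKernel with hκdef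
  have hfst : ∀ i, (π i).fst = μ := fun i => hπ1 i
  have hκ : ∀ i, μ ⊗ₘ κ i = π i := by
    intro i
    rw [hκdef, ← hfst i]
    exact (π i).disintegrate (π i).condKernel
  -- disintegration of the transport cost
  have hcost : ∀ i, ∫⁻ p, ENNReal.ofReal (‖p.1 - p.2‖ ^ 2) ∂(π i)
      = ∫⁻ x, ∫⁻ y, ENNReal.ofReal (‖x - y‖ ^ 2) ∂(κ i x) ∂μ := by
    intro i
    rw [← hκ i, Measure.lintegral_compProd measurable_cost]
  -- a.e. finiteness of second moments of the conditional kernels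
  have hmeas2 : ∀ i : Fin N, Measurable fun x => ∫⁻ y, ENNReal.ofReal (‖y‖ ^ 2) ∂(κ i x) := by
    intro i
    exact Measurable.lintegral_kernel_prod_right
      ((measurable_norm.pow_const 2).ennreal_ofReal.comp measurable_snd)
  have hae : ∀ᵐ x ∂μ, ∀ i, ∫⁻ y, ENNReal.ofReal (‖y‖ ^ 2) ∂(κ i x) < ⊤ := by
    rw [ae_all_iff]
    intro i
    refine ae_lt_top (hmeas2 i) ?_
    have hg : Measurable fun y : Pt d => ENNReal.ofReal (‖y‖ ^ 2) :=
      (measurable_norm.pow_const 2).ennreal_ofReal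
    have : ∫⁻ x, ∫⁻ y, ENNReal.ofReal (‖y‖ ^ 2) ∂(κ i x) ∂μ
        = ∫⁻ y, ENNReal.ofReal (‖y‖ ^ 2) ∂(P i) := by
      calc ∫⁻ x, ∫⁻ y, ENNReal.ofReal (‖y‖ ^ 2) ∂(κ i x) ∂μ
          = ∫⁻ p : Pt d × Pt d, ENNReal.ofReal (‖p.2‖ ^ 2) ∂(μ ⊗ₘ κ i) :=
            (Measure.lintegral_compProd (hg.comp measurable_snd)).symm
        _ = ∫⁻ p : Pt d × Pt d, ENNReal.ofReal (‖p.2‖ ^ 2) ∂(π i) := by rw [hκ i]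
        _ = ∫⁻ y, ENNReal.ofReal (‖y‖ ^ 2) ∂((π i).map Prod.snd) :=
            (lintegral_map hg measurable_snd).symm
        _ = _ := by rw [hπ2 i]
    rw [this]
    exact (hmom i).ne
  -- the glued couplings and their marginals
  have hmarg1 : ∀ i j : Fin N,
      ((μ ⊗ₘ (κ i ×ₖ κ j)).map Prod.snd).map Prod.fst = P i := by
    intro i j
    ext s hs
    rw [Measure.map_apply measurable_fst hs,
      Measure.map_apply measurable_snd (measurable_fst hs),
      Measure.compProd_apply (measurable_snd (measurable_fst hs))]
    have hPi : P i s = ∫⁻ x, κ i x s ∂μ := by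
      rw [← hπ2 i, Measure.map_apply measurable_snd hs, ← hκ i,
        Measure.compProd_apply (measurable_snd hs)]
      rfl
    rw [hPi]
    refine lintegral_congr fun x => ?_
    have hpre : Prod.mk x ⁻¹' (Prod.snd ⁻¹'
          (Prod.fst ⁻¹' s : Set (Pt d × Pt d)) : Set (Pt d × (Pt d × Pt d)))
        = s ×ˢ (Set.univ : Set (Pt d)) := by
      ext p; simp
    rw [hpre, Kernel.prod_apply, Measure.prod_prod, measure_univ, mul_one]
  have hmarg2 : ∀ i j : Fin N,
      ((μ ⊗ₘ (κ i ×ₖ κ j)).map Prod.snd).map Prod.snd = P j := by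
    intro i j
    ext s hs
    rw [Measure.map_apply measurable_snd hs,
      Measure.map_apply measurable_snd (measurable_snd hs),
      Measure.compProd_apply (measurable_snd (measurable_snd hs))]
    have hPj : P j s = ∫⁻ x, κ j x s ∂μ := by
      rw [← hπ2 j, Measure.map_apply measurable_snd hs, ← hκ j,
        Measure.compProd_apply (measurable_snd hs)]
      rfl
    rw [hPj]
    refine lintegral_congr fun x => ?_
    have hpre : Prod.mk x ⁻¹' (Prod.snd ⁻¹'
          (Prod.snd ⁻¹' s : Set (Pt d × Pt d)) : Set (Pt d × (Pt d × Pt d)))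
        = (Set.univ : Set (Pt d)) ×ˢ s := by
      ext p; simp
    rw [hpre, Kernel.prod_apply, Measure.prod_prod, measure_univ, one_mul]
  -- W2sq bounded by the glued cost
  have hG : ∀ i j : Fin N, W2sq (P i) (P j)
      ≤ ∫⁻ x, ∫⁻ q : Pt d × Pt d, ENNReal.ofReal (‖q.1 - q.2‖ ^ 2) ∂((κ i ×ₖ κ j) x) ∂μ := by
    intro i j
    have hle : W2sq (P i) (P j)
        ≤ ∫⁻ p, ENNReal.ofReal (‖p.1 - p.2‖ ^ 2) ∂((μ ⊗ₘ (κ i ×ₖ κ j)).map Prod.snd) :=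
      iInf₂_le ((μ ⊗ₘ (κ i ×ₖ κ j)).map Prod.snd) ⟨hmarg1 i j, hmarg2 i j⟩
    refine hle.trans_eq ?_
    calc ∫⁻ p, ENNReal.ofReal (‖p.1 - p.2‖ ^ 2) ∂((μ ⊗ₘ (κ i ×ₖ κ j)).map Prod.snd)
        = ∫⁻ a : Pt d × Pt d × Pt d, ENNReal.ofReal (‖a.2.1 - a.2.2‖ ^ 2)
            ∂(μ ⊗ₘ (κ i ×ₖ κ j)) := lintegral_map measurable_cost measurable_snd
      _ = ∫⁻ x, ∫⁻ q : Pt d × Pt d, ENNReal.ofReal (‖q.1 - q.2‖ ^ 2) ∂((κ i ×ₖ κ j) x) ∂μ :=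
          Measure.lintegral_compProd (measurable_cost.comp measurable_snd)
  have hGmeas : ∀ i j : Fin N, Measurable fun x =>
      ∫⁻ q : Pt d × Pt d, ENNReal.ofReal (‖q.1 - q.2‖ ^ 2) ∂((κ i ×ₖ κ j) x) :=
    fun i j => Measurable.lintegral_kernel_prod_right (measurable_cost.comp measurable_snd)
  have hCmeas : ∀ i : Fin N, Measurable fun x =>
      ∫⁻ y, ENNReal.ofReal (‖x - y‖ ^ 2) ∂(κ i x) := by
    intro i
    exact Measurable.lintegral_kernel_prod_right
      (((measurable_fst.sub measurable_snd).norm.pow_const 2).ennreal_ofReal)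
  -- main chain
  calc ∑ i, ∑ j, ENNReal.ofReal (l i) * (ENNReal.ofReal (l j) * W2sq (P i) (P j))
      ≤ ∑ i, ∑ j, ENNReal.ofReal (l i) * (ENNReal.ofReal (l j) *
          ∫⁻ x, ∫⁻ q : Pt d × Pt d, ENNReal.ofReal (‖q.1 - q.2‖ ^ 2) ∂((κ i ×ₖ κ j) x) ∂μ) :=
        Finset.sum_le_sum fun i _ => Finset.sum_le_sum fun j _ =>
          mul_le_mul_right (mul_le_mul_right (hG i j) _) _
    _ = ∫⁻ x, ∑ i, ∑ j, ENNReal.ofReal (l i) * (ENNReal.ofReal (l j) *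
          ∫⁻ q : Pt d × Pt d, ENNReal.ofReal (‖q.1 - q.2‖ ^ 2) ∂((κ i ×ₖ κ j) x)) ∂μ := by
        rw [lintegral_finset_sum _ fun i _ => Finset.measurable_sum _ fun j _ =>
          ((hGmeas i j).const_mul _).const_mul _]
        refine Finset.sum_congr rfl fun i _ => ?_
        rw [lintegral_finset_sum _ fun j _ => ((hGmeas i j).const_mul _).const_mul _]
        refine Finset.sum_congr rfl fun j _ => ?_
        rw [lintegral_const_mul _ ((hGmeas i j).const_mul _),
          lintegral_const_mul _ (hGmeas i j)]
    _ ≤ ∫⁻ x, 2 * ∑ i, ENNReal.ofReal (l i) *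
          ∫⁻ y, ENNReal.ofReal (‖x - y‖ ^ 2) ∂(κ i x) ∂μ := by
        refine lintegral_mono_ae ?_
        filter_upwards [hae] with x hx
        haveI : ∀ i : Fin N, IsProbabilityMeasure (κ i x) := fun i => inferInstance
        have hrw : ∀ i j : Fin N,
            ∫⁻ q : Pt d × Pt d, ENNReal.ofReal (‖q.1 - q.2‖ ^ 2) ∂((κ i ×ₖ κ j) x)
            = ∫⁻ y, ∫⁻ z, ENNReal.ofReal (‖y - z‖ ^ 2) ∂(κ j x) ∂(κ i x) := by
          intro i j
          rw [Kernel.prod_apply, lintegral_prod _ measurable_cost.aemeasurable]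
        simp_rw [hrw]
        exact core_ineq l hl hsum x (fun i => κ i x) hx
    _ = 2 * ∑ i, ENNReal.ofReal (l i) * ∫⁻ p, ENNReal.ofReal (‖p.1 - p.2‖ ^ 2) ∂(π i) := by
        rw [lintegral_const_mul _ (Finset.measurable_sum _ fun i _ =>
          (hCmeas i).const_mul _)]
        congr 1
        rw [lintegral_finset_sum _ fun i _ => (hCmeas i).const_mul _]
        refine Finset.sum_congr rfl fun i _ => ?_
        rw [lintegral_const_mul _ (hCmeas i), hcost i]



variable {d N : ℕ}

lemma finitelySupported_moment (P : Measure (Pt d)) [IsProbabilityMeasure P]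
    (h : FinitelySupported P) : ∫⁻ y, ENNReal.ofReal (‖y‖ ^ 2) ∂P < ⊤ := by
  obtain ⟨hfin, hnull⟩ := h
  have hms : MeasurableSet (msupp P) := hfin.measurableSet
  rw [← lintegral_add_compl (fun y => ENNReal.ofReal (‖y‖ ^ 2)) hms]
  have h2 : ∫⁻ y in (msupp P)ᶜ, ENNReal.ofReal (‖y‖ ^ 2) ∂P = 0 :=
    setLIntegral_measure_zero _ _ hnull
  rw [h2, add_zero]
  set C : ℝ≥0∞ := ∑ y ∈ hfin.toFinset, ENNReal.ofReal (‖y‖ ^ 2) with hC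
  have hbound : ∀ y ∈ msupp P, ENNReal.ofReal (‖y‖ ^ 2) ≤ C := by
    intro y hy
    exact Finset.single_le_sum (f := fun y => ENNReal.ofReal (‖y‖ ^ 2))
      (fun _ _ => zero_le) (hfin.mem_toFinset.2 hy)
  calc ∫⁻ y in msupp P, ENNReal.ofReal (‖y‖ ^ 2) ∂P
      ≤ ∫⁻ _ in msupp P, C ∂P := setLIntegral_mono measurable_const hbound
    _ = C * P (msupp P) := setLIntegral_const _ _
    _ < ⊤ := by
        refine ENNReal.mul_lt_top ?_ (measure_lt_top _ _)
        exact (ENNReal.sum_lt_top.2 fun y _ => ENNReal.ofReal_lt_top)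
  -- maybe ENNReal.mul_lt_top wants ≠ ⊤ args; adjust if error


end AuxTwoApprox

/-- an approximate barycenter restricted to the union of the
original supports is a 2-approximation: φ(P̄_org) ≤ 2 φ(P̄). -/
theorem orig_support_two_approx {d N : ℕ}
    (l : Fin N → ℝ) (Pm : Fin N → Measure (Pt d))
    (hl : ∀ i, 0 < l i) (hsum : ∑ i, l i = 1)
    (hprob : ∀ i, IsProbabilityMeasure (Pm i))
    (hfin : ∀ i, FinitelySupported (Pm i))
    (Pbar : Measure (Pt d)) (hbar : IsBarycenter l Pm Pbar)
    (Porg : Measure (Pt d)) (hPorgProb : IsProbabilityMeasure Porg)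
    (hPorgSupp : Porg (origSupport Pm)ᶜ = 0)
    (hPorgOpt : ∀ Q : Measure (Pt d), IsProbabilityMeasure Q →
      Q (origSupport Pm)ᶜ = 0 → phi l Pm Porg ≤ phi l Pm Q) :
    phi l Pm Porg ≤ 2 * phi l Pm Pbar := by
  haveI := hprob
  obtain ⟨hbarProb, hbarMom, -⟩ := hbar
  haveI := hbarProb
  have hl0 : ∀ i, 0 ≤ l i := fun i => (hl i).le
  have hN : 0 < N := by
    rcases Nat.eq_zero_or_pos N with h | h
    · subst h; simp at hsum
    · exact h
  -- sum of weights is 1 in ℝ≥0∞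
  have hsum' : ∑ i, ENNReal.ofReal (l i) = 1 := by
    rw [← ENNReal.ofReal_sum_of_nonneg fun i _ => hl0 i, hsum, ENNReal.ofReal_one]
  -- trivial case
  by_cases htop : phi l Pm Pbar = ⊤
  · rw [htop]
    exact le_top.trans_eq (by simp)
  have hWfin : ∀ i, W2sq Pbar (Pm i) ≠ ⊤ := by
    intro i hW
    apply htop
    have h1 : ENNReal.ofReal (l i) * W2sq Pbar (Pm i) = ⊤ := by
      rw [hW, ENNReal.mul_top (by simpa using (ENNReal.ofReal_pos.2 (hl i)).ne')]
    refine eq_top_iff.2 ?_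
    rw [← h1]
    exact Finset.single_le_sum (f := fun i => ENNReal.ofReal (l i) * W2sq Pbar (Pm i))
      (fun _ _ => zero_le) (Finset.mem_univ i)
  -- choose the best of the input measures
  obtain ⟨j0, -, hj0⟩ := Finset.exists_min_image Finset.univ (fun j => phi l Pm (Pm j))
    ⟨⟨0, hN⟩, Finset.mem_univ _⟩
  have hsupp0 : (Pm j0) (origSupport Pm)ᶜ = 0 := by
    refine measure_mono_null ?_ (hfin j0).2
    exact Set.compl_subset_compl.2 (Set.subset_iUnion (fun i => msupp (Pm i)) j0)
  have step1 : phi l Pm Porg ≤ phi l Pm (Pm j0) := hPorgOpt _ (hprob j0) hsupp0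
  have step2 : phi l Pm (Pm j0) ≤ ∑ j, ENNReal.ofReal (l j) * phi l Pm (Pm j) := by
    calc phi l Pm (Pm j0) = ∑ j, ENNReal.ofReal (l j) * phi l Pm (Pm j0) := by
          rw [← Finset.sum_mul, hsum', one_mul]
      _ ≤ ∑ j, ENNReal.ofReal (l j) * phi l Pm (Pm j) :=
          Finset.sum_le_sum fun j _ => mul_le_mul_right (hj0 j (Finset.mem_univ j)) _
  -- approximately optimal couplings
  have hmomP : ∀ i, ∫⁻ y, ENNReal.ofReal (‖y‖ ^ 2) ∂(Pm i) < ⊤ :=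
    fun i => finitelySupported_moment (Pm i) (hfin i)
  refine ENNReal.le_of_forall_pos_le_add fun ε hε h2fin => ?_
  set δ : ℝ≥0∞ := (ε : ℝ≥0∞) / 2 with hδ
  have hδ0 : δ ≠ 0 := by
    simp [hδ, ENNReal.div_eq_zero_iff, hε.ne']
  have hex : ∀ i : Fin N, ∃ π : Measure (Pt d × Pt d),
      (π.map Prod.fst = Pbar ∧ π.map Prod.snd = Pm i) ∧
      ∫⁻ p, ENNReal.ofReal (‖p.1 - p.2‖ ^ 2) ∂π ≤ W2sq Pbar (Pm i) + δ := by
    intro i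
    have hlt : W2sq Pbar (Pm i) < W2sq Pbar (Pm i) + δ :=
      ENNReal.lt_add_right (hWfin i) hδ0
    by_contra hcon
    push_neg at hcon
    have : W2sq Pbar (Pm i) + δ ≤ W2sq Pbar (Pm i) := by
      refine le_iInf₂ fun π hπ => ?_
      exact (hcon π hπ).le
    exact absurd (this.trans_lt hlt) (lt_irrefl _)
  choose π hπmem hπle using hex
  have hπ1 : ∀ i, (π i).map Prod.fst = Pbar := fun i => (hπmem i).1
  have hπ2 : ∀ i, (π i).map Prod.snd = Pm i := fun i => (hπmem i).2
  -- chain of inequalities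
  have key := pairwise_sum_le l hl0 hsum Pbar Pm hprob hmomP π hπ1 hπ2
  have step3 : ∑ j, ENNReal.ofReal (l j) * phi l Pm (Pm j)
      = ∑ j, ∑ i, ENNReal.ofReal (l j) * (ENNReal.ofReal (l i) * W2sq (Pm j) (Pm i)) := by
    refine Finset.sum_congr rfl fun j _ => ?_
    rw [phi, Finset.mul_sum]
  have step4 : (2 : ℝ≥0∞) * ∑ i, ENNReal.ofReal (l i) *
        ∫⁻ p, ENNReal.ofReal (‖p.1 - p.2‖ ^ 2) ∂(π i)
      ≤ 2 * phi l Pm Pbar + ε := by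
    have : ∑ i, ENNReal.ofReal (l i) * ∫⁻ p, ENNReal.ofReal (‖p.1 - p.2‖ ^ 2) ∂(π i)
        ≤ phi l Pm Pbar + δ := by
      calc ∑ i, ENNReal.ofReal (l i) * ∫⁻ p, ENNReal.ofReal (‖p.1 - p.2‖ ^ 2) ∂(π i)
          ≤ ∑ i, ENNReal.ofReal (l i) * (W2sq Pbar (Pm i) + δ) :=
            Finset.sum_le_sum fun i _ => mul_le_mul_right (hπle i) _
        _ = ∑ i, (ENNReal.ofReal (l i) * W2sq Pbar (Pm i) + ENNReal.ofReal (l i) * δ) := by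
            simp_rw [mul_add]
        _ = phi l Pm Pbar + (∑ i, ENNReal.ofReal (l i)) * δ := by
            rw [Finset.sum_add_distrib, Finset.sum_mul]; rfl
        _ = phi l Pm Pbar + δ := by rw [hsum', one_mul]
    calc (2:ℝ≥0∞) * ∑ i, ENNReal.ofReal (l i) *
          ∫⁻ p, ENNReal.ofReal (‖p.1 - p.2‖ ^ 2) ∂(π i)
        ≤ 2 * (phi l Pm Pbar + δ) := mul_le_mul_right this 2
      _ = 2 * phi l Pm Pbar + 2 * δ := by rw [mul_add]
      _ = 2 * phi l Pm Pbar + ε := by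
          congr 1
          rw [hδ, mul_comm]
          exact ENNReal.div_mul_cancel (by norm_num) (by norm_num)
  calc phi l Pm Porg ≤ phi l Pm (Pm j0) := step1
    _ ≤ ∑ j, ENNReal.ofReal (l j) * phi l Pm (Pm j) := step2
    _ = ∑ j, ∑ i, ENNReal.ofReal (l j) * (ENNReal.ofReal (l i) * W2sq (Pm j) (Pm i)) := step3
    _ ≤ 2 * ∑ i, ENNReal.ofReal (l i) * ∫⁻ p, ENNReal.ofReal (‖p.1 - p.2‖ ^ 2) ∂(π i) := key
    _ ≤ 2 * phi l Pm Pbar + ε := step4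
end

section
/- Let P_1, …, P_N be discrete probability measures on ℝ^d and λ_1, …, λ_N > 0 with ∑_{i=1}^N λ_i = 1, and let P̄ be a barycenter. Let n : ℝ^d → S_org be any map assigning to each point a nearest point of S_org = ∪_{i=1}^N supp(P_i) (i.e. ‖n(x) − x‖ ≤ ‖s − x‖ for all s ∈ S_org). Then the rounded measure P̄_r, the pushforward of P̄ under n, satisfies φ(P̄_r) ≤ 2 · φ(P̄). -/
open MeasureTheory ENNReal

/-! ### Auxiliary lemmas -/

section Aux

/-- Weighted Pythagoras/bias-variance identity. -/
lemma pyth_aux {d N : ℕ} (l : Fin N → ℝ) (hsum : ∑ i, l i = 1) (z : Pt d) (y : Fin N → Pt d) :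
    ∑ i, l i * ‖z - y i‖ ^ 2
      = ‖z - ∑ j, l j • y j‖ ^ 2 + ∑ i, l i * ‖(∑ j, l j • y j) - y i‖ ^ 2 := by
  set m : Pt d := ∑ j, l j • y j with hm
  have expand : ∀ u v : Pt d, ‖u - v‖ ^ 2 = ‖u‖ ^ 2 - 2 * inner ℝ u v + ‖v‖ ^ 2 := by
    intro u v
    rw [← real_inner_self_eq_norm_sq, ← real_inner_self_eq_norm_sq, ← real_inner_self_eq_norm_sq,
      inner_sub_sub_self, real_inner_comm v u]
    ring
  have hinner : ∀ w : Pt d, (inner ℝ w m : ℝ) = ∑ i, l i * (inner ℝ w (y i) : ℝ) := by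
    intro w
    rw [hm, inner_sum]
    exact Finset.sum_congr rfl fun i _ => real_inner_smul_right _ _ _
  have h1 : ∀ w : Pt d, ∑ i, l i * ‖w - y i‖ ^ 2
      = ‖w‖ ^ 2 - 2 * (inner ℝ w m : ℝ) + ∑ i, l i * ‖y i‖ ^ 2 := by
    intro w
    rw [hinner]
    calc ∑ i, l i * ‖w - y i‖ ^ 2
        = ∑ i, (l i * ‖w‖ ^ 2 - 2 * (l i * inner ℝ w (y i)) + l i * ‖y i‖ ^ 2) := by
          refine Finset.sum_congr rfl fun i _ => by rw [expand]; ring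
      _ = (∑ i, l i) * ‖w‖ ^ 2 - 2 * ∑ i, l i * (inner ℝ w (y i) : ℝ) + ∑ i, l i * ‖y i‖ ^ 2 := by
          rw [Finset.sum_add_distrib, Finset.sum_sub_distrib, ← Finset.sum_mul, ← Finset.mul_sum]
      _ = _ := by rw [hsum]; ring
  have hz := h1 z
  have hmm := h1 m
  have hself : (inner ℝ m m : ℝ) = ‖m‖ ^ 2 := real_inner_self_eq_norm_sq m
  have hex := expand z m
  linarith

/-- The key pointwise inequality with parameter η. -/
lemma keyineq_aux {d N : ℕ} (l : Fin N → ℝ) (hl : ∀ i, 0 ≤ l i) (hsum : ∑ i, l i = 1)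
    (η : ℝ) (hη : 0 < η) (z x : Pt d) (y : Fin N → Pt d)
    (ha : ‖z - x‖ ^ 2 ≤ ∑ i, l i * ‖x - y i‖ ^ 2) :
    ∑ i, l i * ‖z - y i‖ ^ 2
      ≤ (2 + η) * ∑ i, l i * ‖x - y i‖ ^ 2 + (1 + 1/η) * ‖x - ∑ j, l j • y j‖ ^ 2 := by
  set m : Pt d := ∑ j, l j • y j with hm
  set a : ℝ := ‖z - x‖
  set b : ℝ := ‖x - m‖
  set V : ℝ := ∑ i, l i * ‖m - y i‖ ^ 2
  have hV : 0 ≤ V := Finset.sum_nonneg fun i _ => mul_nonneg (hl i) (sq_nonneg _)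
  have hpz := pyth_aux l hsum z y
  have hpx := pyth_aux l hsum x y
  have htri : ‖z - m‖ ≤ a + b := by
    have : z - m = (z - x) + (x - m) := by abel
    rw [this]; exact norm_add_le _ _
  have hzm2 : ‖z - m‖ ^ 2 ≤ (a + b) ^ 2 := by
    have h0 : (0:ℝ) ≤ ‖z - m‖ := norm_nonneg _
    nlinarith [norm_nonneg (z - x), norm_nonneg (x - m)]
  have h2ab : 2 * (a * b) ≤ η * a ^ 2 + b ^ 2 / η := by
    rw [← mul_le_mul_iff_right₀ hη]
    have he : η * (η * a ^ 2 + b ^ 2 / η) = η ^ 2 * a ^ 2 + b ^ 2 := by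
      field_simp
    rw [he]
    nlinarith [sq_nonneg (η * a - b)]
  have hb2 : b ^ 2 / η = (1/η) * b ^ 2 := by ring
  have hsq : (a + b) ^ 2 = a ^ 2 + 2 * (a * b) + b ^ 2 := by ring
  have hb0 : 0 ≤ (1/η) * b ^ 2 := mul_nonneg (by positivity) (sq_nonneg b)
  have hT0 : 0 ≤ ∑ i, l i * ‖x - y i‖ ^ 2 :=
    Finset.sum_nonneg fun i _ => mul_nonneg (hl i) (sq_nonneg _)
  have hη2 : 0 ≤ η * a ^ 2 := mul_nonneg hη.le (sq_nonneg a)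
  have hmulη : η * a ^ 2 ≤ η * ∑ i, l i * ‖x - y i‖ ^ 2 :=
    mul_le_mul_of_nonneg_left ha hη.le
  linarith [sq_nonneg b]

lemma cost_meas {d : ℕ} : Measurable (fun p : Pt d × Pt d => ENNReal.ofReal (‖p.1 - p.2‖ ^ 2)) :=
  ((measurable_fst.sub measurable_snd).norm.pow_const 2).ennreal_ofReal

lemma sqnorm_meas {d : ℕ} : Measurable (fun x : Pt d => ENNReal.ofReal (‖x‖ ^ 2)) :=
  (measurable_norm.pow_const 2).ennreal_ofReal

/-- Finitely supported finite measures have finite second moment. -/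
lemma fsm_of_finsupp {d : ℕ} (P : Measure (Pt d)) [IsFiniteMeasure P]
    (h : FinitelySupported P) : FiniteSecondMoment P := by
  obtain ⟨hfin, hnull⟩ := h
  have hms : MeasurableSet (msupp P) := hfin.measurableSet
  rw [FiniteSecondMoment, ← lintegral_add_compl _ hms]
  have h2 : ∫⁻ x in (msupp P)ᶜ, ENNReal.ofReal (‖x‖ ^ 2) ∂P = 0 :=
    setLIntegral_measure_zero _ _ hnull
  set C : ℝ≥0∞ := hfin.toFinset.sup fun x => ENNReal.ofReal (‖x‖ ^ 2) with hC
  have h1 : ∫⁻ x in msupp P, ENNReal.ofReal (‖x‖ ^ 2) ∂P ≤ C * P (msupp P) := by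
    refine le_trans (setLIntegral_mono (g := fun _ => C) measurable_const (fun x hx => ?_)) ?_
    · exact Finset.le_sup (f := fun x => ENNReal.ofReal (‖x‖ ^ 2)) (hfin.mem_toFinset.2 hx)
    · rw [setLIntegral_const]
  have hClt : C < ⊤ := by
    rw [hC]
    refine (Finset.sup_lt_iff (by simp)).2 fun x _ => ofReal_lt_top
  rw [h2, add_zero]
  exact lt_of_le_of_lt h1 (ENNReal.mul_lt_top hClt (measure_lt_top P _))

/-- W2sq is at most the cost of any coupling. -/
lemma w2sq_le {d : ℕ} {P Q : Measure (Pt d)} {π : Measure (Pt d × Pt d)}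
    (h1 : π.map Prod.fst = P) (h2 : π.map Prod.snd = Q) :
    W2sq P Q ≤ ∫⁻ p, ENNReal.ofReal (‖p.1 - p.2‖ ^ 2) ∂π :=
  iInf₂_le π ⟨h1, h2⟩

/-- W2sq between probability measures with finite second moments is finite. -/
lemma w2sq_lt_top {d : ℕ} {P Q : Measure (Pt d)} [IsProbabilityMeasure P] [IsProbabilityMeasure Q]
    (hP : FiniteSecondMoment P) (hQ : FiniteSecondMoment Q) : W2sq P Q < ⊤ := by
  have hmfst : (P.prod Q).map Prod.fst = P := by
    rw [Measure.map_fst_prod]; simp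
  have hmsnd : (P.prod Q).map Prod.snd = Q := by
    rw [Measure.map_snd_prod]; simp
  refine lt_of_le_of_lt (w2sq_le hmfst hmsnd) ?_
  have hb : ∀ p : Pt d × Pt d, ENNReal.ofReal (‖p.1 - p.2‖ ^ 2)
      ≤ 2 * ENNReal.ofReal (‖p.1‖ ^ 2) + 2 * ENNReal.ofReal (‖p.2‖ ^ 2) := by
    intro p
    have hr : ‖p.1 - p.2‖ ^ 2 ≤ 2 * ‖p.1‖ ^ 2 + 2 * ‖p.2‖ ^ 2 := by
      have := norm_sub_le p.1 p.2
      nlinarith [norm_nonneg (p.1 - p.2), norm_nonneg p.1, norm_nonneg p.2,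
        sq_nonneg (‖p.1‖ - ‖p.2‖)]
    calc ENNReal.ofReal (‖p.1 - p.2‖ ^ 2) ≤ ENNReal.ofReal (2 * ‖p.1‖ ^ 2 + 2 * ‖p.2‖ ^ 2) :=
          ENNReal.ofReal_le_ofReal hr
      _ ≤ 2 * ENNReal.ofReal (‖p.1‖ ^ 2) + 2 * ENNReal.ofReal (‖p.2‖ ^ 2) := by
          rw [ENNReal.ofReal_add (by positivity) (by positivity), ENNReal.ofReal_mul (by norm_num),
            ENNReal.ofReal_mul (by norm_num)]
          simp [ENNReal.ofReal_ofNat]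
  calc ∫⁻ p, ENNReal.ofReal (‖p.1 - p.2‖ ^ 2) ∂(P.prod Q)
      ≤ ∫⁻ p, (2 * ENNReal.ofReal (‖p.1‖ ^ 2) + 2 * ENNReal.ofReal (‖p.2‖ ^ 2)) ∂(P.prod Q) :=
        lintegral_mono hb
    _ = 2 * ∫⁻ p, ENNReal.ofReal (‖p.1‖ ^ 2) ∂(P.prod Q)
        + 2 * ∫⁻ p, ENNReal.ofReal (‖p.2‖ ^ 2) ∂(P.prod Q) := by
        have hf1 : Measurable (fun p : Pt d × Pt d => ENNReal.ofReal (‖p.1‖ ^ 2)) := by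
          exact sqnorm_meas.comp measurable_fst
        have hf2 : Measurable (fun p : Pt d × Pt d => ENNReal.ofReal (‖p.2‖ ^ 2)) := by
          exact sqnorm_meas.comp measurable_snd
        rw [lintegral_add_left (hf1.const_mul 2), lintegral_const_mul 2 hf1,
          lintegral_const_mul 2 hf2]
    _ = 2 * ∫⁻ x, ENNReal.ofReal (‖x‖ ^ 2) ∂P + 2 * ∫⁻ x, ENNReal.ofReal (‖x‖ ^ 2) ∂Q := by
        rw [← lintegral_map sqnorm_meas measurable_fst, ← lintegral_map sqnorm_meas measurable_snd,
          hmfst, hmsnd]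
    _ < ⊤ := by
        rw [FiniteSecondMoment] at hP hQ
        exact ENNReal.add_lt_top.2 ⟨ENNReal.mul_lt_top (by norm_num) hP,
          ENNReal.mul_lt_top (by norm_num) hQ⟩

lemma withDensity_finset_sum' {α ι : Type*} [MeasurableSpace α] (μ : Measure α) (s : Finset ι)
    (f : ι → α → ℝ≥0∞) (hf : ∀ i ∈ s, Measurable (f i)) :
    μ.withDensity (fun x => ∑ i ∈ s, f i x) = ∑ i ∈ s, μ.withDensity (f i) := by
  classical
  induction s using Finset.induction with
  | empty => simp
  | insert _ _ hx ih =>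
    rename_i a s
    simp only [Finset.sum_insert hx]
    rw [show (fun x => f a x + ∑ i ∈ s, f i x) = f a + fun x => ∑ i ∈ s, f i x from rfl,
      withDensity_add_left (hf a (Finset.mem_insert_self a s)),
      ih (fun i hi => hf i (Finset.mem_insert_of_mem hi))]

lemma map_finset_sum' {α β ι : Type*} [MeasurableSpace α] [MeasurableSpace β] {f : α → β}
    (hf : Measurable f) (s : Finset ι) (μ : ι → Measure α) :
    (∑ i ∈ s, μ i).map f = ∑ i ∈ s, (μ i).map f := by
  ext t ht
  rw [Measure.map_apply hf ht, Measure.finset_sum_apply, Measure.finset_sum_apply]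
  exact Finset.sum_congr rfl fun i _ => (Measure.map_apply hf ht).symm

lemma arith_aux (B d e h : ℝ) (hB0 : 0 ≤ B) (hd : 0 < d) (hh : 0 < h) (he : 0 < e)
    (h1 : h * B ≤ d/2) (h2 : (3 + h + 1/h) * e = d/2) :
    (2 + h) * (B + e) + (1 + 1/h) * e ≤ 2*B + d := by
  nlinarith [mul_nonneg hh.le he.le, mul_nonneg (le_of_lt (one_div_pos.2 hh)) he.le]

end Aux

set_option maxHeartbeats 1000000 in
/-- rounding a barycenter to nearest points of the union of the
original supports gives a 2-approximation: φ(P̄_r) ≤ 2 φ(P̄). -/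
theorem rounded_barycenter_two_approx {d N : ℕ}
    (l : Fin N → ℝ) (Pm : Fin N → Measure (Pt d))
    (hl : ∀ i, 0 < l i) (hsum : ∑ i, l i = 1)
    (hprob : ∀ i, IsProbabilityMeasure (Pm i))
    (hfin : ∀ i, FinitelySupported (Pm i))
    (Pbar : Measure (Pt d)) (hbar : IsBarycenter l Pm Pbar)
    (n : Pt d → Pt d) (hn : Measurable n)
    (hnmem : ∀ x, n x ∈ origSupport Pm)
    (hnnear : ∀ x, ∀ s ∈ origSupport Pm, ‖n x - x‖ ≤ ‖s - x‖) :
    phi l Pm (Pbar.map n) ≤ 2 * phi l Pm Pbar := by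
  classical
  obtain ⟨hPprob, hPfsm, hmin⟩ := hbar
  haveI := hPprob
  have hl0 : ∀ i, (0:ℝ) ≤ l i := fun i => (hl i).le
  have hWlt : ∀ i, W2sq Pbar (Pm i) < ⊤ := fun i => by
    haveI := hprob i
    exact w2sq_lt_top hPfsm (fsm_of_finsupp _ (hfin i))
  have hphi_ne : phi l Pm Pbar ≠ ⊤ := by
    rw [phi]
    exact (ENNReal.sum_lt_top.2 fun i _ =>
      ENNReal.mul_lt_top ENNReal.ofReal_lt_top (hWlt i)).ne
  have hsum1 : ∑ i, ENNReal.ofReal (l i) = 1 := by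
    rw [← ENNReal.ofReal_sum_of_nonneg (fun i _ => hl0 i), hsum, ENNReal.ofReal_one]
  have hconv : ∀ (t : Fin N → ℝ), (∀ i, 0 ≤ t i) →
      ∑ i, ENNReal.ofReal (l i) * ENNReal.ofReal (t i) = ENNReal.ofReal (∑ i, l i * t i) := by
    intro t ht
    rw [ENNReal.ofReal_sum_of_nonneg (fun i _ => mul_nonneg (hl0 i) (ht i))]
    exact Finset.sum_congr rfl fun i _ => (ENNReal.ofReal_mul (hl0 i)).symm
  have hcost2 : ∀ c : Pt d, Measurable fun x : Pt d => ENNReal.ofReal (‖x - c‖ ^ 2) :=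
    fun c => (((measurable_id.sub measurable_const)).norm.pow_const 2).ennreal_ofReal
  have hcostn : ∀ c : Pt d, Measurable fun x : Pt d => ENNReal.ofReal (‖n x - c‖ ^ 2) :=
    fun c => (((hn.sub measurable_const)).norm.pow_const 2).ennreal_ofReal
  refine ENNReal.le_of_forall_pos_le_add fun δ hδ _ => ?_
  set B : ℝ := (phi l Pm Pbar).toReal with hB
  have hB0 : 0 ≤ B := ENNReal.toReal_nonneg
  have hphiB : phi l Pm Pbar = ENNReal.ofReal B := (ENNReal.ofReal_toReal hphi_ne).symm
  set δ' : ℝ := (δ : ℝ) with hδ'def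
  have hδ' : (0:ℝ) < δ' := hδ
  set η : ℝ := δ' / (2*(B+1)) with hηdef
  have hη : 0 < η := by positivity
  set ε : ℝ := (δ'/2) / (3 + η + 1/η) with hεdef
  have hε : 0 < ε := by positivity
  -- ### choose near-optimal couplings
  have hex : ∀ i, ∃ π : Measure (Pt d × Pt d),
      (π.map Prod.fst = Pbar ∧ π.map Prod.snd = Pm i) ∧
      ∫⁻ p, ENNReal.ofReal (‖p.1 - p.2‖ ^ 2) ∂π ≤ W2sq Pbar (Pm i) + ENNReal.ofReal ε := by
    intro i
    have hlt : W2sq Pbar (Pm i) < W2sq Pbar (Pm i) + ENNReal.ofReal ε :=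
      ENNReal.lt_add_right (hWlt i).ne (ne_of_gt (ENNReal.ofReal_pos.2 hε))
    conv_lhs at hlt => rw [W2sq]
    obtain ⟨π, hlt2⟩ := iInf_lt_iff.1 hlt
    obtain ⟨hmem, hlt3⟩ := iInf_lt_iff.1 hlt2
    exact ⟨π, hmem, hlt3.le⟩
  choose π hπm hπC using hex
  have hπ1 : ∀ i, (π i).map Prod.fst = Pbar := fun i => (hπm i).1
  have hπ2 : ∀ i, (π i).map Prod.snd = Pm i := fun i => (hπm i).2
  haveI hπprob : ∀ i, IsProbabilityMeasure (π i) := by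
    intro i
    constructor
    have := congrArg (fun μ : Measure (Pt d) => μ Set.univ) (hπ1 i)
    simpa [Measure.map_apply measurable_fst MeasurableSet.univ] using this
  have hπnull : ∀ i, π i (Prod.snd ⁻¹' (msupp (Pm i))ᶜ) = 0 := by
    intro i
    have hAms : MeasurableSet (msupp (Pm i)) := (hfin i).1.measurableSet
    rw [← Measure.map_apply measurable_snd hAms.compl, hπ2 i]
    exact (hfin i).2
  -- ### finite support sets and the set of tuples
  set A : Fin N → Finset (Pt d) := fun i => (hfin i).1.toFinset with hA
  have hAcoe : ∀ i, (A i : Set (Pt d)) = msupp (Pm i) := fun i => (hfin i).1.coe_toFinset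
  set T : Finset (Fin N → Pt d) := Fintype.piFinset A with hT
  -- ### disintegration of couplings over the atoms of `Pm i`
  set mu : Fin N → Pt d → Measure (Pt d) :=
    fun i c => ((π i).restrict (Set.univ ×ˢ {c})).map Prod.fst with hmu
  have hmu_app : ∀ i c (s : Set (Pt d)), MeasurableSet s → mu i c s = π i (s ×ˢ {c}) := by
    intro i c s hs
    rw [hmu]
    simp only
    rw [Measure.map_apply measurable_fst hs, Measure.restrict_apply (measurable_fst hs)]
    congr 1
    ext p
    simp only [Set.mem_inter_iff, Set.mem_preimage, Set.mem_prod, Set.mem_univ,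
      Set.mem_singleton_iff, true_and]
  have hmu_le : ∀ i c, mu i c ≤ Pbar := by
    intro i c
    refine Measure.le_iff.2 fun s hs => ?_
    rw [hmu_app i c s hs, ← hπ1 i, Measure.map_apply measurable_fst hs]
    exact measure_mono (fun p hp => hp.1)
  haveI hmufin : ∀ i c, IsFiniteMeasure (mu i c) := by
    intro i c
    constructor
    calc mu i c Set.univ ≤ Pbar Set.univ := Measure.le_iff'.1 (hmu_le i c) _
      _ < ⊤ := measure_lt_top _ _
  have hmu_ac : ∀ i c, mu i c ≪ Pbar := fun i c =>
    Measure.absolutelyContinuous_of_le (hmu_le i c)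
  set f : Fin N → Pt d → Pt d → ℝ≥0∞ := fun i c => (mu i c).rnDeriv Pbar with hf
  have hf_meas : ∀ i c, Measurable (f i c) := fun i c => Measure.measurable_rnDeriv _ _
  have h_wd : ∀ i c, Pbar.withDensity (f i c) = mu i c := fun i c =>
    Measure.withDensity_rnDeriv_eq _ _ (hmu_ac i c)
  have h_int : ∀ i c (g : Pt d → ℝ≥0∞), Measurable g →
      ∫⁻ x, f i c x * g x ∂Pbar = ∫⁻ x, g x ∂(mu i c) := by
    intro i c g hg
    rw [← h_wd i c, lintegral_withDensity_eq_lintegral_mul _ (hf_meas i c) hg]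
    rfl
  have h_sum_mu : ∀ i, ∑ c ∈ A i, mu i c = Pbar := by
    intro i
    ext s hs
    rw [Measure.finset_sum_apply]
    have h2 : π i (Prod.fst ⁻¹' s) = Pbar s := by
      rw [← Measure.map_apply measurable_fst hs, hπ1 i]
    calc ∑ c ∈ A i, mu i c s = ∑ c ∈ A i, π i (s ×ˢ {c}) :=
          Finset.sum_congr rfl fun c _ => hmu_app i c s hs
      _ = π i (⋃ c ∈ A i, s ×ˢ ({c} : Set (Pt d))) := by
          rw [measure_biUnion_finset ?_ (fun c _ => hs.prod (measurableSet_singleton c))]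
          intro c _ c' _ hne
          simp only [Function.onFun]
          rw [Set.disjoint_left]
          rintro ⟨p1, p2⟩ hp hq
          exact hne (hp.2.symm.trans hq.2)
      _ = π i (s ×ˢ (A i : Set (Pt d))) := by
          congr 1
          ext p
          simp only [Set.mem_iUnion, Set.mem_prod, Set.mem_singleton_iff, Finset.mem_coe]
          constructor
          · rintro ⟨c, hc, hp1, hp2⟩; exact ⟨hp1, hp2 ▸ hc⟩
          · rintro ⟨hp1, hp2⟩; exact ⟨p.2, hp2, hp1, rfl⟩
      _ = Pbar s := by
          rw [← h2]
          refine le_antisymm (measure_mono fun p hp => hp.1) ?_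
          have hsub : Prod.fst ⁻¹' s
              ⊆ (s ×ˢ (A i : Set (Pt d))) ∪ (Prod.snd ⁻¹' (msupp (Pm i))ᶜ) := by
            intro p hp
            by_cases hc : p.2 ∈ msupp (Pm i)
            · exact Or.inl ⟨hp, (hAcoe i).symm ▸ hc⟩
            · exact Or.inr hc
          calc π i (Prod.fst ⁻¹' s)
              ≤ π i (s ×ˢ (A i : Set (Pt d))) + π i (Prod.snd ⁻¹' (msupp (Pm i))ᶜ) :=
                le_trans (measure_mono hsub) (measure_union_le _ _)
            _ = π i (s ×ˢ (A i : Set (Pt d))) := by rw [hπnull i, add_zero]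
  -- ### decomposition of integrals against π i
  have h_decomp : ∀ i (g : Pt d → Pt d → ℝ≥0∞), (∀ c, Measurable (g c)) →
      ∫⁻ p : Pt d × Pt d, g p.2 p.1 ∂(π i) = ∑ c ∈ A i, ∫⁻ x, g c x ∂(mu i c) := by
    intro i g hg
    have hU : MeasurableSet ((Set.univ : Set (Pt d)) ×ˢ (A i : Set (Pt d))) :=
      MeasurableSet.univ.prod (A i).measurableSet
    have hcompl : π i (((Set.univ : Set (Pt d)) ×ˢ (A i : Set (Pt d)))ᶜ) = 0 := by
      have : ((Set.univ : Set (Pt d)) ×ˢ (A i : Set (Pt d)))ᶜ = Prod.snd ⁻¹' (msupp (Pm i))ᶜ := by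
        ext p
        simp [hAcoe i]
      rw [this]
      exact hπnull i
    calc ∫⁻ p, g p.2 p.1 ∂π i
        = ∫⁻ p in (Set.univ : Set (Pt d)) ×ˢ (A i : Set (Pt d)), g p.2 p.1 ∂π i
          + ∫⁻ p in ((Set.univ : Set (Pt d)) ×ˢ (A i : Set (Pt d)))ᶜ, g p.2 p.1 ∂π i :=
          (lintegral_add_compl _ hU).symm
      _ = ∫⁻ p in (Set.univ : Set (Pt d)) ×ˢ (A i : Set (Pt d)), g p.2 p.1 ∂π i := by
          rw [setLIntegral_measure_zero _ _ hcompl, add_zero]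
      _ = ∑ c ∈ A i, ∫⁻ p in (Set.univ : Set (Pt d)) ×ˢ ({c} : Set (Pt d)), g p.2 p.1 ∂π i := by
          have hUU : (Set.univ : Set (Pt d)) ×ˢ (A i : Set (Pt d))
              = ⋃ c ∈ A i, (Set.univ : Set (Pt d)) ×ˢ ({c} : Set (Pt d)) := by
            ext p
            simp only [Set.mem_prod, Set.mem_univ, true_and, Set.mem_iUnion, Finset.mem_coe,
              Set.mem_singleton_iff]
            constructor
            · intro h; exact ⟨p.2, h, rfl⟩
            · rintro ⟨c, hc, hpc⟩; exact hpc ▸ hc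
          rw [hUU]
          refine lintegral_biUnion_finset ?_ (fun c _ =>
            MeasurableSet.univ.prod (measurableSet_singleton c)) _
          intro c _ c' _ hne
          simp only [Function.onFun]
          rw [Set.disjoint_left]
          rintro ⟨p1, p2⟩ hp hq
          exact hne (hp.2.symm.trans hq.2)
      _ = ∑ c ∈ A i, ∫⁻ x, g c x ∂(mu i c) := by
          refine Finset.sum_congr rfl fun c _ => ?_
          rw [setLIntegral_congr_fun (MeasurableSet.univ.prod (measurableSet_singleton c))
            (fun p (hp : p ∈ (Set.univ : Set (Pt d)) ×ˢ ({c} : Set (Pt d))) => ?_)]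
          · rw [hmu]
            simp only
            rw [lintegral_map (hg c) measurable_fst]
          · have : p.2 = c := hp.2
            rw [this]
  -- ### the glued density
  set F : (Fin N → Pt d) → Pt d → ℝ≥0∞ := fun y x => ∏ j, f j (y j) x with hFdef
  have hF_meas : ∀ y, Measurable (F y) := fun y =>
    Finset.measurable_prod _ fun j _ => hf_meas j (y j)
  have h_ae : ∀ i, ∀ᵐ x ∂Pbar, ∑ c ∈ A i, f i c x = 1 := by
    intro i
    have hm : Measurable (fun x => ∑ c ∈ A i, f i c x) :=
      Finset.measurable_sum _ fun c _ => hf_meas i c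
    have hwds : Pbar.withDensity (fun x => ∑ c ∈ A i, f i c x) = Pbar := by
      rw [withDensity_finset_sum' _ _ _ (fun c _ => hf_meas i c)]
      calc ∑ c ∈ A i, Pbar.withDensity (f i c) = ∑ c ∈ A i, mu i c :=
            Finset.sum_congr rfl fun c _ => h_wd i c
        _ = Pbar := h_sum_mu i
    have h1 := Measure.rnDeriv_withDensity Pbar hm
    rw [hwds] at h1
    have h2 := Measure.rnDeriv_self Pbar
    filter_upwards [h1, h2] with x hx1 hx2
    rw [← hx1, hx2]
  -- ### the master identity
  have h_master : ∀ i (g : Pt d → Pt d → ℝ≥0∞), (∀ c, Measurable (g c)) →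
      ∑ y ∈ T, ∫⁻ x, F y x * g (y i) x ∂Pbar = ∫⁻ p : Pt d × Pt d, g p.2 p.1 ∂(π i) := by
    intro i g hg
    rw [h_decomp i g hg]
    rw [← lintegral_finset_sum (f := fun y x => F y x * g (y i) x) _ (fun y _ => (hF_meas y).mul (hg (y i)))]
    have halg : ∀ᵐ x ∂Pbar, ∑ y ∈ T, F y x * g (y i) x = ∑ c ∈ A i, f i c x * g c x := by
      filter_upwards [ae_all_iff.2 h_ae] with x hx
      set h' : Fin N → Pt d → ℝ≥0∞ := fun j c => if j = i then f i c x * g c x else f j c x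
        with hh'
      have key1 : ∀ y ∈ T, F y x * g (y i) x = ∏ j, h' j (y j) := by
        intro y _
        have e1 : ∏ j, h' j (y j) = h' i (y i) * ∏ j ∈ Finset.univ.erase i, h' j (y j) :=
          (Finset.mul_prod_erase _ _ (Finset.mem_univ i)).symm
        have e2 : ∏ j ∈ Finset.univ.erase i, h' j (y j)
            = ∏ j ∈ Finset.univ.erase i, f j (y j) x :=
          Finset.prod_congr rfl fun j hj => if_neg (Finset.ne_of_mem_erase hj)
        have e3 : F y x = f i (y i) x * ∏ j ∈ Finset.univ.erase i, f j (y j) x :=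
          (Finset.mul_prod_erase _ _ (Finset.mem_univ i)).symm
        have e7 : h' i (y i) = f i (y i) x * g (y i) x := by simp [hh']
        rw [e1, e2, e3, e7]
        ring
      rw [Finset.sum_congr rfl key1, hT, ← Finset.prod_univ_sum A h']
      have e4 : ∏ j, ∑ c ∈ A j, h' j c
          = (∑ c ∈ A i, h' i c) * ∏ j ∈ Finset.univ.erase i, ∑ c ∈ A j, h' j c :=
        (Finset.mul_prod_erase _ _ (Finset.mem_univ i)).symm
      have e5 : ∑ c ∈ A i, h' i c = ∑ c ∈ A i, f i c x * g c x :=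
        Finset.sum_congr rfl fun c _ => by simp [hh']
      have e6 : ∏ j ∈ Finset.univ.erase i, ∑ c ∈ A j, h' j c = 1 := by
        refine Finset.prod_eq_one fun j hj => ?_
        have : ∑ c ∈ A j, h' j c = ∑ c ∈ A j, f j c x :=
          Finset.sum_congr rfl fun c _ => if_neg (Finset.ne_of_mem_erase hj)
        rw [this]
        exact hx j
      rw [e4, e5, e6, mul_one]
    rw [lintegral_congr_ae halg, lintegral_finset_sum (f := fun c x => f i c x * g c x) _ (fun c _ => (hf_meas i c).mul (hg c))]
    exact Finset.sum_congr rfl fun c _ => h_int i c (g c) (hg c)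
  -- ### masses, centroid map, centroid measure
  set m : (Fin N → Pt d) → ℝ≥0∞ := fun y => ∫⁻ x, F y x ∂Pbar with hmdef
  set G : (Fin N → Pt d) → Pt d := fun y => ∑ j, l j • y j with hGdef
  set Q : Measure (Pt d) := ∑ y ∈ T, m y • Measure.dirac (G y) with hQdef
  have h_msum : ∑ y ∈ T, m y = 1 := by
    rw [hmdef]
    simp only
    rw [← lintegral_finset_sum _ (fun y _ => hF_meas y)]
    have hone : ∀ᵐ x ∂Pbar, ∑ y ∈ T, F y x = 1 := by
      filter_upwards [ae_all_iff.2 h_ae] with x hx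
      rw [hFdef, hT]
      simp only
      rw [← Finset.prod_univ_sum A (fun j c => f j c x)]
      exact Finset.prod_eq_one fun j _ => hx j
    rw [lintegral_congr_ae hone, lintegral_one, measure_univ]
  -- ### Q is a probability measure with finite second moment
  haveI hQprob : IsProbabilityMeasure Q := by
    constructor
    rw [hQdef, Measure.finset_sum_apply]
    calc ∑ y ∈ T, (m y • Measure.dirac (G y)) Set.univ = ∑ y ∈ T, m y := by
          refine Finset.sum_congr rfl fun y _ => ?_
          rw [Measure.smul_apply, measure_univ, smul_eq_mul, mul_one]
      _ = 1 := h_msum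
  have hm_lt_top : ∀ y ∈ T, m y < ⊤ := fun y hy =>
    (le_trans (Finset.single_le_sum (fun i _ => zero_le) hy) h_msum.le).trans_lt
      one_lt_top
  have hQfsm : FiniteSecondMoment Q := by
    rw [FiniteSecondMoment, hQdef, lintegral_finset_sum_measure]
    refine ENNReal.sum_lt_top.2 fun y hy => ?_
    rw [lintegral_smul_measure, lintegral_dirac' _ sqnorm_meas]
    exact ENNReal.mul_lt_top (hm_lt_top y hy) ENNReal.ofReal_lt_top
  -- ### marginals of the glued tuple measure
  have hmarg : ∀ i, (∑ y ∈ T, m y • Measure.dirac (y i)) = Pm i := by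
    intro i
    ext s hs
    rw [Measure.finset_sum_apply]
    have hdirac : ∀ a : Pt d, Measure.dirac a s = Set.indicator s (fun _ => (1:ℝ≥0∞)) a := by
      intro a
      rw [Measure.dirac_apply' _ hs]
      rfl
    have h3 : ∀ y ∈ T, (m y • Measure.dirac (y i)) s
        = ∫⁻ x, F y x * Set.indicator s (fun _ => (1:ℝ≥0∞)) (y i) ∂Pbar := by
      intro y _
      rw [Measure.smul_apply, smul_eq_mul, hdirac]
      exact (lintegral_mul_const _ (hF_meas y)).symm
    calc ∑ y ∈ T, (m y • Measure.dirac (y i)) s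
        = ∑ y ∈ T, ∫⁻ x, F y x * Set.indicator s (fun _ => (1:ℝ≥0∞)) (y i) ∂Pbar :=
          Finset.sum_congr rfl h3
      _ = ∫⁻ p : Pt d × Pt d, Set.indicator s (fun _ => (1:ℝ≥0∞)) p.2 ∂(π i) :=
          h_master i (fun c _x => Set.indicator s (fun _ => (1:ℝ≥0∞)) c)
            (fun c => measurable_const)
      _ = Pm i s := by
          rw [← lintegral_map (measurable_const.indicator hs) measurable_snd, hπ2 i,
            lintegral_indicator hs, setLIntegral_one]
  -- ### the centroid measure Q is close to the P i
  have hEbound : ∀ i, W2sq Q (Pm i) ≤ ∑ y ∈ T, m y * ENNReal.ofReal (‖G y - y i‖ ^ 2) := by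
    intro i
    set ρ : Measure (Pt d × Pt d) := ∑ y ∈ T, m y • Measure.dirac (G y, y i) with hρdef
    have hfst : ρ.map Prod.fst = Q := by
      rw [hρdef, map_finset_sum' measurable_fst, hQdef]
      refine Finset.sum_congr rfl fun y _ => ?_
      rw [Measure.map_smul, Measure.map_dirac' measurable_fst]
    have hsnd : ρ.map Prod.snd = Pm i := by
      rw [hρdef, map_finset_sum' measurable_snd]
      calc ∑ y ∈ T, (m y • Measure.dirac ((G y, y i) : Pt d × Pt d)).map Prod.snd
          = ∑ y ∈ T, m y • Measure.dirac (y i) := Finset.sum_congr rfl fun y _ => by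
            rw [Measure.map_smul, Measure.map_dirac' measurable_snd]
        _ = Pm i := hmarg i
    refine le_trans (w2sq_le hfst hsnd) ?_
    rw [hρdef, lintegral_finset_sum_measure]
    refine le_of_eq (Finset.sum_congr rfl fun y _ => ?_)
    rw [lintegral_smul_measure, lintegral_dirac' _ cost_meas, smul_eq_mul]
  -- ### linearity: swapping sums and integrals
  have hswap : ∀ (g : Fin N → (Fin N → Pt d) → Pt d → ℝ≥0∞),
      (∀ i y, Measurable (g i y)) →
      ∑ y ∈ T, ∫⁻ x, F y x * (∑ i, ENNReal.ofReal (l i) * g i y x) ∂Pbar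
        = ∑ i, ENNReal.ofReal (l i) * ∑ y ∈ T, ∫⁻ x, F y x * g i y x ∂Pbar := by
    intro g hg
    have h1 : ∀ y ∈ T, ∫⁻ x, F y x * (∑ i, ENNReal.ofReal (l i) * g i y x) ∂Pbar
        = ∑ i, ENNReal.ofReal (l i) * ∫⁻ x, F y x * g i y x ∂Pbar := by
      intro y _
      rw [show (fun x => F y x * (∑ i, ENNReal.ofReal (l i) * g i y x))
          = fun x => ∑ i, ENNReal.ofReal (l i) * (F y x * g i y x) from funext fun x => by
        rw [Finset.mul_sum]
        exact Finset.sum_congr rfl fun i _ => by ring]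
      rw [lintegral_finset_sum (f := fun i x => ENNReal.ofReal (l i) * (F y x * g i y x)) _ (fun i _ => ((hF_meas y).mul (hg i y)).const_mul _)]
      exact Finset.sum_congr rfl fun i _ => lintegral_const_mul _ ((hF_meas y).mul (hg i y))
    rw [Finset.sum_congr rfl h1, Finset.sum_comm]
    exact Finset.sum_congr rfl fun i _ => (Finset.mul_sum _ _ _).symm
  -- ### Pythagoras pointwise
  have hPyth_point : ∀ (x : Pt d) (y : Fin N → Pt d),
      (∑ i, ENNReal.ofReal (l i) * ENNReal.ofReal (‖x - y i‖ ^ 2))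
        = ENNReal.ofReal (‖x - G y‖ ^ 2)
          + ∑ i, ENNReal.ofReal (l i) * ENNReal.ofReal (‖G y - y i‖ ^ 2) := by
    intro x y
    rw [hconv _ (fun i => sq_nonneg _), hconv _ (fun i => sq_nonneg _),
      ← ENNReal.ofReal_add (sq_nonneg _)
        (Finset.sum_nonneg fun i _ => mul_nonneg (hl0 i) (sq_nonneg _))]
    exact congrArg ENNReal.ofReal (pyth_aux l hsum x y)
  -- ### the two evaluations of the glued cost
  have hL : ∑ y ∈ T, ∫⁻ x, F y x *
        (∑ i, ENNReal.ofReal (l i) * ENNReal.ofReal (‖x - y i‖ ^ 2)) ∂Pbar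
      = ∑ i, ENNReal.ofReal (l i) *
          ∫⁻ p : Pt d × Pt d, ENNReal.ofReal (‖p.1 - p.2‖ ^ 2) ∂(π i) := by
    have h0 : ∑ y ∈ T, ∫⁻ x, F y x *
          (∑ i, ENNReal.ofReal (l i) * ENNReal.ofReal (‖x - y i‖ ^ 2)) ∂Pbar
        = ∑ i, ENNReal.ofReal (l i) *
            ∑ y ∈ T, ∫⁻ x, F y x * ENNReal.ofReal (‖x - y i‖ ^ 2) ∂Pbar :=
      hswap _ (fun i y => hcost2 (y i))
    rw [h0]
    refine Finset.sum_congr rfl fun i _ => ?_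
    exact congrArg (fun z => ENNReal.ofReal (l i) * z)
      (h_master i (fun c x => ENNReal.ofReal (‖x - c‖ ^ 2)) (fun c => hcost2 c))
  have hR : ∑ y ∈ T, ∫⁻ x, F y x *
        (∑ i, ENNReal.ofReal (l i) * ENNReal.ofReal (‖x - y i‖ ^ 2)) ∂Pbar
      = (∑ y ∈ T, ∫⁻ x, F y x * ENNReal.ofReal (‖x - G y‖ ^ 2) ∂Pbar)
        + ∑ i, ENNReal.ofReal (l i) * ∑ y ∈ T, m y * ENNReal.ofReal (‖G y - y i‖ ^ 2) := by
    have h1 : ∀ y ∈ T, ∫⁻ x, F y x *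
          (∑ i, ENNReal.ofReal (l i) * ENNReal.ofReal (‖x - y i‖ ^ 2)) ∂Pbar
        = ∫⁻ x, F y x * ENNReal.ofReal (‖x - G y‖ ^ 2) ∂Pbar
          + m y * (∑ i, ENNReal.ofReal (l i) * ENNReal.ofReal (‖G y - y i‖ ^ 2)) := by
      intro y _
      rw [show (fun x => F y x *
            (∑ i, ENNReal.ofReal (l i) * ENNReal.ofReal (‖x - y i‖ ^ 2)))
          = fun x => F y x * ENNReal.ofReal (‖x - G y‖ ^ 2)
            + F y x * (∑ i, ENNReal.ofReal (l i) * ENNReal.ofReal (‖G y - y i‖ ^ 2)) from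
        funext fun x => by rw [hPyth_point x y, mul_add]]
      rw [lintegral_add_left (f := fun x => F y x * ENNReal.ofReal (‖x - G y‖ ^ 2)) ((hF_meas y).mul (hcost2 (G y))),
        lintegral_mul_const _ (hF_meas y)]
    rw [Finset.sum_congr rfl h1, Finset.sum_add_distrib]
    congr 1
    calc ∑ y ∈ T, m y * (∑ i, ENNReal.ofReal (l i) * ENNReal.ofReal (‖G y - y i‖ ^ 2))
        = ∑ y ∈ T, ∑ i, ENNReal.ofReal (l i) * (m y * ENNReal.ofReal (‖G y - y i‖ ^ 2)) := by
          refine Finset.sum_congr rfl fun y _ => ?_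
          rw [Finset.mul_sum]
          exact Finset.sum_congr rfl fun i _ => by ring
      _ = ∑ i, ∑ y ∈ T, ENNReal.ofReal (l i) * (m y * ENNReal.ofReal (‖G y - y i‖ ^ 2)) :=
          Finset.sum_comm
      _ = ∑ i, ENNReal.ofReal (l i) * ∑ y ∈ T, m y * ENNReal.ofReal (‖G y - y i‖ ^ 2) :=
          Finset.sum_congr rfl fun i _ => (Finset.mul_sum _ _ _).symm
  -- ### the barycenter property forces D ≤ ε
  have hphiQ : phi l Pm Q
      ≤ ∑ i, ENNReal.ofReal (l i) * ∑ y ∈ T, m y * ENNReal.ofReal (‖G y - y i‖ ^ 2) := by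
    rw [phi]
    exact Finset.sum_le_sum fun i _ => mul_le_mul_right (hEbound i) _
  have hbarQ : phi l Pm Pbar ≤ phi l Pm Q := hmin Q hQprob hQfsm
  have hsumCi : ∑ i, ENNReal.ofReal (l i) *
        ∫⁻ p : Pt d × Pt d, ENNReal.ofReal (‖p.1 - p.2‖ ^ 2) ∂(π i)
      ≤ phi l Pm Pbar + ENNReal.ofReal ε := by
    calc ∑ i, ENNReal.ofReal (l i) *
          ∫⁻ p : Pt d × Pt d, ENNReal.ofReal (‖p.1 - p.2‖ ^ 2) ∂(π i)
        ≤ ∑ i, ENNReal.ofReal (l i) * (W2sq Pbar (Pm i) + ENNReal.ofReal ε) :=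
          Finset.sum_le_sum fun i _ => mul_le_mul_right (hπC i) _
      _ = ∑ i, (ENNReal.ofReal (l i) * W2sq Pbar (Pm i)
            + ENNReal.ofReal (l i) * ENNReal.ofReal ε) :=
          Finset.sum_congr rfl fun i _ => mul_add _ _ _
      _ = phi l Pm Pbar + (∑ i, ENNReal.ofReal (l i)) * ENNReal.ofReal ε := by
          rw [Finset.sum_add_distrib, ← Finset.sum_mul, phi]
      _ = phi l Pm Pbar + ENNReal.ofReal ε := by rw [hsum1, one_mul]
  have hD_le : (∑ y ∈ T, ∫⁻ x, F y x * ENNReal.ofReal (‖x - G y‖ ^ 2) ∂Pbar)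
      ≤ ENNReal.ofReal ε := by
    have h1 : phi l Pm Pbar + (∑ y ∈ T, ∫⁻ x, F y x * ENNReal.ofReal (‖x - G y‖ ^ 2) ∂Pbar)
        ≤ phi l Pm Pbar + ENNReal.ofReal ε := by
      calc phi l Pm Pbar + (∑ y ∈ T, ∫⁻ x, F y x * ENNReal.ofReal (‖x - G y‖ ^ 2) ∂Pbar)
          ≤ (∑ i, ENNReal.ofReal (l i) * ∑ y ∈ T, m y * ENNReal.ofReal (‖G y - y i‖ ^ 2))
            + (∑ y ∈ T, ∫⁻ x, F y x * ENNReal.ofReal (‖x - G y‖ ^ 2) ∂Pbar) :=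
            add_le_add_left (le_trans hbarQ hphiQ) _
        _ = (∑ y ∈ T, ∫⁻ x, F y x * ENNReal.ofReal (‖x - G y‖ ^ 2) ∂Pbar)
            + ∑ i, ENNReal.ofReal (l i) * ∑ y ∈ T, m y * ENNReal.ofReal (‖G y - y i‖ ^ 2) :=
            add_comm _ _
        _ = ∑ i, ENNReal.ofReal (l i) *
              ∫⁻ p : Pt d × Pt d, ENNReal.ofReal (‖p.1 - p.2‖ ^ 2) ∂(π i) :=
            hR.symm.trans hL
        _ ≤ phi l Pm Pbar + ENNReal.ofReal ε := hsumCi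
    exact (ENNReal.add_le_add_iff_left hphi_ne).1 h1
  -- ### cost of the rounded measure
  have hRound : ∀ i, W2sq (Pbar.map n) (Pm i)
      ≤ ∑ y ∈ T, ∫⁻ x, F y x * ENNReal.ofReal (‖n x - y i‖ ^ 2) ∂Pbar := by
    intro i
    have heq : ∑ y ∈ T, ∫⁻ x, F y x * ENNReal.ofReal (‖n x - y i‖ ^ 2) ∂Pbar
        = ∫⁻ p : Pt d × Pt d, ENNReal.ofReal (‖n p.1 - p.2‖ ^ 2) ∂(π i) :=
      h_master i (fun c x => ENNReal.ofReal (‖n x - c‖ ^ 2)) (fun c => hcostn c)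
    rw [heq]
    have hmm : Measurable (Prod.map n (id : Pt d → Pt d)) := hn.prodMap measurable_id
    have hfst : ((π i).map (Prod.map n id)).map Prod.fst = Pbar.map n := by
      rw [Measure.map_map measurable_fst hmm]
      have he : (Prod.fst ∘ Prod.map n id : Pt d × Pt d → Pt d) = n ∘ Prod.fst := rfl
      rw [he, ← Measure.map_map hn measurable_fst, hπ1 i]
    have hsnd : ((π i).map (Prod.map n id)).map Prod.snd = Pm i := by
      rw [Measure.map_map measurable_snd hmm]
      have he : (Prod.snd ∘ Prod.map n id : Pt d × Pt d → Pt d) = Prod.snd := rfl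
      rw [he, hπ2 i]
    refine le_trans (w2sq_le hfst hsnd) ?_
    rw [lintegral_map cost_meas hmm]
    exact le_of_eq (lintegral_congr fun p => rfl)
  -- ### pointwise comparison for the rounded cost
  have hmemT : ∀ y ∈ T, ∀ j, y j ∈ origSupport Pm := by
    intro y hy j
    rw [hT] at hy
    have hj := (Fintype.mem_piFinset.1 hy) j
    rw [origSupport]
    exact Set.mem_iUnion.2 ⟨j, (hfin j).1.mem_toFinset.1 hj⟩
  have hpt2 : ∀ (x : Pt d), ∀ y ∈ T,
      (∑ i, ENNReal.ofReal (l i) * ENNReal.ofReal (‖n x - y i‖ ^ 2))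
        ≤ ENNReal.ofReal (2 + η) *
            (∑ i, ENNReal.ofReal (l i) * ENNReal.ofReal (‖x - y i‖ ^ 2))
          + ENNReal.ofReal (1 + 1/η) * ENNReal.ofReal (‖x - G y‖ ^ 2) := by
    intro x y hy
    have ha : ‖n x - x‖ ^ 2 ≤ ∑ i, l i * ‖x - y i‖ ^ 2 := by
      have h1 : ∀ i : Fin N, l i * ‖n x - x‖ ^ 2 ≤ l i * ‖x - y i‖ ^ 2 := by
        intro i
        refine mul_le_mul_of_nonneg_left ?_ (hl0 i)
        have h2 : ‖n x - x‖ ≤ ‖x - y i‖ := by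
          rw [norm_sub_rev x (y i)]
          exact hnnear x (y i) (hmemT y hy i)
        exact pow_le_pow_left₀ (norm_nonneg _) h2 2
      calc ‖n x - x‖ ^ 2 = (∑ i, l i) * ‖n x - x‖ ^ 2 := by rw [hsum, one_mul]
        _ = ∑ i, l i * ‖n x - x‖ ^ 2 := Finset.sum_mul _ _ _
        _ ≤ _ := Finset.sum_le_sum fun i _ => h1 i
    have hT0 : (0:ℝ) ≤ ∑ i, l i * ‖x - y i‖ ^ 2 :=
      Finset.sum_nonneg fun i _ => mul_nonneg (hl0 i) (sq_nonneg _)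
    have hkey := keyineq_aux l hl0 hsum η hη (n x) x y ha
    rw [hconv _ (fun i => sq_nonneg _), hconv _ (fun i => sq_nonneg _),
      ← ENNReal.ofReal_mul (by positivity : (0:ℝ) ≤ 2 + η),
      ← ENNReal.ofReal_mul (by positivity : (0:ℝ) ≤ 1 + 1/η),
      ← ENNReal.ofReal_add (mul_nonneg (by positivity) hT0)
        (mul_nonneg (by positivity) (sq_nonneg _))]
    exact ENNReal.ofReal_le_ofReal hkey
  -- ### assembling the rounded bound
  have hfinal1 : phi l Pm (Pbar.map n)
      ≤ ∑ y ∈ T, ∫⁻ x, F y x *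
          (∑ i, ENNReal.ofReal (l i) * ENNReal.ofReal (‖n x - y i‖ ^ 2)) ∂Pbar := by
    have h0 : ∑ y ∈ T, ∫⁻ x, F y x *
          (∑ i, ENNReal.ofReal (l i) * ENNReal.ofReal (‖n x - y i‖ ^ 2)) ∂Pbar
        = ∑ i, ENNReal.ofReal (l i) *
            ∑ y ∈ T, ∫⁻ x, F y x * ENNReal.ofReal (‖n x - y i‖ ^ 2) ∂Pbar :=
      hswap _ (fun i y => hcostn (y i))
    rw [h0, phi]
    exact Finset.sum_le_sum fun i _ => mul_le_mul_right (hRound i) _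
  have hmeasS : ∀ y : Fin N → Pt d,
      Measurable (fun x => ∑ i, ENNReal.ofReal (l i) * ENNReal.ofReal (‖x - y i‖ ^ 2)) :=
    fun y => Finset.measurable_sum _ fun i _ => (hcost2 (y i)).const_mul _
  have hfinal2 : ∑ y ∈ T, ∫⁻ x, F y x *
        (∑ i, ENNReal.ofReal (l i) * ENNReal.ofReal (‖n x - y i‖ ^ 2)) ∂Pbar
      ≤ ENNReal.ofReal (2 + η) * (∑ i, ENNReal.ofReal (l i) *
            ∫⁻ p : Pt d × Pt d, ENNReal.ofReal (‖p.1 - p.2‖ ^ 2) ∂(π i))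
        + ENNReal.ofReal (1 + 1/η) *
            ∑ y ∈ T, ∫⁻ x, F y x * ENNReal.ofReal (‖x - G y‖ ^ 2) ∂Pbar := by
    calc ∑ y ∈ T, ∫⁻ x, F y x *
          (∑ i, ENNReal.ofReal (l i) * ENNReal.ofReal (‖n x - y i‖ ^ 2)) ∂Pbar
        ≤ ∑ y ∈ T, ∫⁻ x, F y x * (ENNReal.ofReal (2 + η) *
              (∑ i, ENNReal.ofReal (l i) * ENNReal.ofReal (‖x - y i‖ ^ 2))
            + ENNReal.ofReal (1 + 1/η) * ENNReal.ofReal (‖x - G y‖ ^ 2)) ∂Pbar := by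
          refine Finset.sum_le_sum fun y hy => lintegral_mono fun x => ?_
          exact mul_le_mul_right (hpt2 x y hy) _
      _ = ∑ y ∈ T, (ENNReal.ofReal (2 + η) * ∫⁻ x, F y x *
              (∑ i, ENNReal.ofReal (l i) * ENNReal.ofReal (‖x - y i‖ ^ 2)) ∂Pbar
            + ENNReal.ofReal (1 + 1/η) *
              ∫⁻ x, F y x * ENNReal.ofReal (‖x - G y‖ ^ 2) ∂Pbar) := by
          refine Finset.sum_congr rfl fun y _ => ?_
          rw [show (fun x => F y x * (ENNReal.ofReal (2 + η) *
                (∑ i, ENNReal.ofReal (l i) * ENNReal.ofReal (‖x - y i‖ ^ 2))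
              + ENNReal.ofReal (1 + 1/η) * ENNReal.ofReal (‖x - G y‖ ^ 2)))
              = fun x => ENNReal.ofReal (2 + η) * (F y x *
                  (∑ i, ENNReal.ofReal (l i) * ENNReal.ofReal (‖x - y i‖ ^ 2)))
                + ENNReal.ofReal (1 + 1/η) * (F y x * ENNReal.ofReal (‖x - G y‖ ^ 2)) from
            funext fun x => by ring]
          rw [lintegral_add_left (f := fun x => ENNReal.ofReal (2 + η) * (F y x *
                (∑ i, ENNReal.ofReal (l i) * ENNReal.ofReal (‖x - y i‖ ^ 2))))
              (((hF_meas y).mul (hmeasS y)).const_mul _),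
            lintegral_const_mul _ (f := fun x => F y x *
                (∑ i, ENNReal.ofReal (l i) * ENNReal.ofReal (‖x - y i‖ ^ 2))) ((hF_meas y).mul (hmeasS y)),
            lintegral_const_mul _ (f := fun x => F y x * ENNReal.ofReal (‖x - G y‖ ^ 2))
              ((hF_meas y).mul (hcost2 (G y)))]
      _ = ENNReal.ofReal (2 + η) * (∑ y ∈ T, ∫⁻ x, F y x *
              (∑ i, ENNReal.ofReal (l i) * ENNReal.ofReal (‖x - y i‖ ^ 2)) ∂Pbar)
            + ENNReal.ofReal (1 + 1/η) *
              ∑ y ∈ T, ∫⁻ x, F y x * ENNReal.ofReal (‖x - G y‖ ^ 2) ∂Pbar := by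
          rw [Finset.sum_add_distrib, ← Finset.mul_sum, ← Finset.mul_sum]
      _ = _ := by rw [hL]
  -- ### final arithmetic
  have hchain : phi l Pm (Pbar.map n)
      ≤ ENNReal.ofReal (2 + η) * (phi l Pm Pbar + ENNReal.ofReal ε)
        + ENNReal.ofReal (1 + 1/η) * ENNReal.ofReal ε :=
    le_trans (le_trans hfinal1 hfinal2)
      (add_le_add (mul_le_mul_right hsumCi _) (mul_le_mul_right hD_le _))
  refine le_trans hchain ?_
  have hu : (3 + η + 1/η) * ε = δ'/2 := by
    rw [hεdef, mul_comm]
    exact div_mul_cancel₀ _ (ne_of_gt (by positivity))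
  have hη1 : η * B ≤ δ'/2 := by
    rw [hηdef, div_mul_eq_mul_div, div_le_div_iff₀ (by positivity) (by norm_num)]
    nlinarith [hδ'.le, hB0]
  have harith : (2 + η) * (B + ε) + (1 + 1/η) * ε ≤ 2*B + δ' :=
    arith_aux B δ' ε η hB0 hδ' hη hε hη1 hu
  calc ENNReal.ofReal (2 + η) * (phi l Pm Pbar + ENNReal.ofReal ε)
        + ENNReal.ofReal (1 + 1/η) * ENNReal.ofReal ε
      = ENNReal.ofReal ((2 + η) * (B + ε) + (1 + 1/η) * ε) := by
        rw [hphiB, ← ENNReal.ofReal_add hB0 hε.le,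
          ← ENNReal.ofReal_mul (by positivity : (0:ℝ) ≤ 2 + η),
          ← ENNReal.ofReal_mul (by positivity : (0:ℝ) ≤ 1 + 1/η),
          ← ENNReal.ofReal_add (mul_nonneg (by positivity) (by positivity))
            (mul_nonneg (by positivity) hε.le)]
    _ ≤ ENNReal.ofReal (2*B + δ') := ENNReal.ofReal_le_ofReal harith
    _ = 2 * phi l Pm Pbar + δ := by
        rw [ENNReal.ofReal_add (by positivity) hδ'.le,
          ENNReal.ofReal_mul (by norm_num : (0:ℝ) ≤ 2), ← hphiB, hδ'def,
          ENNReal.ofReal_coe_nnreal, ENNReal.ofReal_ofNat]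
end
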